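/- Let g', b be natural numbers, m ≥ 1, and let h : Fin b → ZMod m satisfy ∑_k h k = 0. Set m₀ = Nat.gcd m (Finset.univ.gcd (fun k => (h k).val)). Then Nat.card { ψ : Ξ_{g',b} →* Multiplicative (ZMod m) // Function.Surjective ψ ∧ ∀ k, ψ(γ_k) = Multiplicative.ofAdd (h k) } multiplied by ∏_{p ∈ m₀.primeFactors} p^{2g'} equals m^{2g'} multiplied by ∏_{p ∈ m₀.primeFactors} (p^{2g'} − 1). -/

import Mathlib

open scoped commutatorElement

open Finset ArithmeticFunction
open scoped ArithmeticFunction.Moebius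


/-- The single relator `(∏_j [A_j, B_j]) · γ_1 ⋯ γ_b` in the free group on
`(Fin g' ⊕ Fin g') ⊕ Fin b`, where `A_j`, `B_j`, `γ_k` are the free generators indexed by
the left, middle and right summands, products taken in the order of the indices. -/
def surfaceRelator (g' b : ℕ) : FreeGroup ((Fin g' ⊕ Fin g') ⊕ Fin b) :=
  (List.ofFn fun j : Fin g' =>
      ⁅(FreeGroup.of (Sum.inl (Sum.inl j)) : FreeGroup ((Fin g' ⊕ Fin g') ⊕ Fin b)),
        FreeGroup.of (Sum.inl (Sum.inr j))⁆).prod *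
  (List.ofFn fun k : Fin b =>
      (FreeGroup.of (Sum.inr k) : FreeGroup ((Fin g' ⊕ Fin g') ⊕ Fin b))).prod

/-- The fundamental group `Ξ_{g',b}` of a genus `g'` surface with `b` punctures, presented
with generators `A_j, B_j (j < g')`, `γ_k (k < b)` and the single surface relator. -/
abbrev SurfaceGroup (g' b : ℕ) : Type :=
  PresentedGroup ({surfaceRelator g' b} : Set (FreeGroup ((Fin g' ⊕ Fin g') ⊕ Fin b)))

/-- The image `γ_k` of the `k`-th puncture generator in `Ξ_{g',b}`. -/
def SurfaceGroup.gamma {g' b : ℕ} (k : Fin b) : SurfaceGroup g' b :=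
  PresentedGroup.of (Sum.inr k)


lemma mul_pow_apply (N k : ℕ) (hk : k ≠ 0) :
    ((μ * ↑(pow N) : ArithmeticFunction ℤ)) k
      = ∑ d ∈ k.divisors, μ d * ((k / d : ℕ) : ℤ) ^ N := by
  rw [mul_apply, Nat.sum_divisorsAntidiagonal (f := fun a b => μ a * (↑(pow N) : ArithmeticFunction ℤ) b)]
  refine Finset.sum_congr rfl fun d hd => ?_
  have hd' : k / d ≠ 0 := by
    have := Nat.div_pos (Nat.le_of_dvd (Nat.pos_of_ne_zero hk) (Nat.dvd_of_mem_divisors hd))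
      (Nat.pos_of_mem_divisors hd)
    omega
  rw [natCoe_apply, pow_apply, if_neg (by tauto)]
  push_cast; ring

lemma jordan_aux (N : ℕ) {k : ℕ} (hk : k ≠ 0) :
    (∑ d ∈ k.divisors, μ d * ((k / d : ℕ) : ℤ) ^ N) * ∏ p ∈ k.primeFactors, (p : ℤ) ^ N
      = (k : ℤ) ^ N * ∏ p ∈ k.primeFactors, ((p : ℤ) ^ N - 1) := by
  have key : ((μ * ↑(pow N) : ArithmeticFunction ℤ)).pmul (prodPrimeFactors fun p => (p : ℤ) ^ N)
      = (↑(pow N) : ArithmeticFunction ℤ).pmul (prodPrimeFactors fun p => (p : ℤ) ^ N - 1) := by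
    rw [ArithmeticFunction.IsMultiplicative.eq_iff_eq_on_prime_powers _
      ((isMultiplicative_moebius.mul isMultiplicative_pow.natCast).pmul
        (IsMultiplicative.prodPrimeFactors _)) _
      (isMultiplicative_pow.natCast.pmul (IsMultiplicative.prodPrimeFactors _))]
    intro p i hp
    rcases Nat.eq_zero_or_pos i with rfl | hi
    · simp only [pow_zero]
      rw [((isMultiplicative_moebius.mul isMultiplicative_pow.natCast).pmul
          (IsMultiplicative.prodPrimeFactors _)).map_one,
        (isMultiplicative_pow.natCast.pmul (IsMultiplicative.prodPrimeFactors _)).map_one]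
    obtain ⟨j, rfl⟩ : ∃ j, i = j + 1 := ⟨i - 1, by omega⟩
    have hppow : (p : ℕ) ^ (j + 1) ≠ 0 := pow_ne_zero _ hp.pos.ne'
    have hpf : ((p : ℕ) ^ (j + 1)).primeFactors = {p} :=
      Nat.primeFactors_prime_pow (by omega) hp
    have hmu : ((μ * ↑(pow N) : ArithmeticFunction ℤ)) (p ^ (j + 1))
        = ((p : ℤ) ^ N) ^ (j + 1) - ((p : ℤ) ^ N) ^ j := by
      rw [mul_pow_apply N _ hppow, Nat.sum_divisors_prime_pow hp]
      have hterm : ∀ x ∈ Finset.range (j + 2),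
          μ (p ^ x) * ((p ^ (j + 1) / p ^ x : ℕ) : ℤ) ^ N
            = if x = 0 then ((p:ℤ)^N)^(j+1) else if x = 1 then -(((p:ℤ)^N)^j) else 0 := by
        intro x hx
        rcases Nat.eq_zero_or_pos x with rfl | hx0
        · simp only [pow_zero, moebius_apply_one, Nat.div_one, if_pos rfl, one_mul]
          push_cast
          rw [pow_right_comm]
        rw [moebius_apply_prime_pow hp hx0.ne']
        rcases eq_or_ne x 1 with rfl | hx1
        · rw [if_pos rfl, if_neg one_ne_zero, if_pos rfl]
          rw [Nat.pow_div (by omega) hp.pos]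
          push_cast
          rw [pow_right_comm]
          ring
        · rw [if_neg hx1, if_neg hx0.ne', if_neg hx1, zero_mul]
      rw [Finset.sum_congr rfl hterm, Finset.sum_range_succ', Finset.sum_range_succ']
      simp
      ring
    rw [pmul_apply, pmul_apply, hmu, prodPrimeFactors_apply hppow, prodPrimeFactors_apply hppow,
      hpf, Finset.prod_singleton, Finset.prod_singleton, natCoe_apply, pow_apply,
      if_neg (by tauto)]
    push_cast
    rw [pow_right_comm]
    ring
  have := congrArg (fun f : ArithmeticFunction ℤ => f k) key
  simp only [pmul_apply, prodPrimeFactors_apply hk, natCoe_apply, pow_apply,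
    if_neg (by tauto : ¬(N = 0 ∧ k = 0))] at this
  rw [mul_pow_apply N k hk] at this
  push_cast at this ⊢
  linarith [this]

lemma card_dvd_val (m d : ℕ) (hm : m ≠ 0) (hd : d ∣ m) (hd0 : d ≠ 0) :
    Nat.card {x : ZMod m // d ∣ x.val} = m / d := by
  haveI : NeZero m := ⟨hm⟩
  have hlt : ∀ j : Fin (m / d), d * (j : ℕ) < m := fun j =>
    lt_of_lt_of_le (mul_lt_mul_of_pos_left j.2 (Nat.pos_of_ne_zero hd0))
      (le_of_eq (Nat.mul_div_cancel' hd))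
  have e : {x : ZMod m // d ∣ x.val} ≃ Fin (m / d) :=
    { toFun := fun x => ⟨x.1.val / d, Nat.div_lt_div_of_lt_of_dvd hd (ZMod.val_lt x.1)⟩
      invFun := fun j => ⟨((d * j : ℕ) : ZMod m), by
        rw [ZMod.val_natCast_of_lt (hlt j)]; exact Dvd.intro _ rfl⟩
      left_inv := fun x => by
        ext
        simp only
        rw [Nat.mul_div_cancel' x.2]
        exact ZMod.natCast_rightInverse x.1
      right_inv := fun j => by
        ext
        simp only
        rw [ZMod.val_natCast_of_lt (hlt j), Nat.mul_div_cancel_left _ (Nat.pos_of_ne_zero hd0)] }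
  rw [Nat.card_congr e, Nat.card_eq_fintype_card, Fintype.card_fin]

lemma card_pi_dvd_val {I : Type*} [Fintype I] (m d : ℕ) (hm : m ≠ 0) (hd : d ∣ m) (hd0 : d ≠ 0) :
    Nat.card {v : I → ZMod m // ∀ i, d ∣ (v i).val} = (m / d) ^ Fintype.card I := by
  classical
  haveI : NeZero m := ⟨hm⟩
  rw [Nat.card_congr (Equiv.subtypePiEquivPi (p := fun (_ : I) (x : ZMod m) => d ∣ x.val)),
    Nat.card_eq_fintype_card, Fintype.card_pi]
  have h1 : Fintype.card {x : ZMod m // d ∣ x.val} = m / d := by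
    rw [← Nat.card_eq_fintype_card, card_dvd_val m d hm hd hd0]
  simp only [Finset.prod_const, Finset.card_univ]
  congr 1

lemma count_main {I : Type*} [Fintype I] (m M : ℕ) (hm : m ≠ 0) (hM : M ∣ m) :
    (Nat.card {v : I → ZMod m // Nat.gcd M (Finset.univ.gcd fun i => (v i).val) = 1} : ℤ)
      = ∑ d ∈ M.divisors, μ d * ((m / d : ℕ) : ℤ) ^ Fintype.card I := by
  classical
  haveI : NeZero m := ⟨hm⟩
  have hM0 : M ≠ 0 := by rintro rfl; exact hm (Nat.eq_zero_of_zero_dvd hM)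
  have lhs : (Nat.card {v : I → ZMod m //
      Nat.gcd M (Finset.univ.gcd fun i => (v i).val) = 1} : ℤ)
      = ∑ v : I → ZMod m,
          if Nat.gcd M (Finset.univ.gcd fun i => (v i).val) = 1 then (1 : ℤ) else 0 := by
    rw [Nat.card_eq_fintype_card, Fintype.card_subtype, Finset.sum_ite, Finset.sum_const,
      Finset.sum_const_zero, add_zero, nsmul_eq_mul, mul_one]
  rw [lhs]
  have step1 : ∀ v : I → ZMod m,
      (if Nat.gcd M (Finset.univ.gcd fun i => (v i).val) = 1 then (1 : ℤ) else 0)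
        = ∑ d ∈ M.divisors, if d ∣ (Finset.univ.gcd fun i => (v i).val) then μ d else 0 := by
    intro v
    set gv := Finset.univ.gcd fun i => (v i).val with hgv
    have hdiv : (Nat.gcd M gv).divisors = M.divisors.filter (· ∣ gv) := by
      ext d
      simp only [Nat.mem_divisors, Finset.mem_filter, Nat.dvd_gcd_iff]
      constructor
      · rintro ⟨⟨h1, h2⟩, -⟩; exact ⟨⟨h1, hM0⟩, h2⟩
      · rintro ⟨⟨h1, -⟩, h2⟩; exact ⟨⟨h1, h2⟩, Nat.gcd_ne_zero_left hM0⟩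
    rw [← Finset.sum_filter, ← hdiv]
    have hz := ArithmeticFunction.coe_mul_zeta_apply (f := (μ : ArithmeticFunction ℤ))
      (x := Nat.gcd M gv)
    rw [moebius_mul_coe_zeta] at hz
    rw [← hz, ArithmeticFunction.one_apply]
  rw [Finset.sum_congr rfl fun v _ => step1 v, Finset.sum_comm]
  refine Finset.sum_congr rfl fun d hd => ?_
  obtain ⟨hdM, -⟩ := Nat.mem_divisors.mp hd
  have hd0 : d ≠ 0 := by rintro rfl; exact hM0 (Nat.eq_zero_of_zero_dvd hdM)
  have hdm : d ∣ m := hdM.trans hM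
  have inner : ∀ v : I → ZMod m,
      (d ∣ Finset.univ.gcd fun i => (v i).val) ↔ ∀ i, d ∣ (v i).val := fun v =>
    ⟨fun hdv i => hdv.trans (Finset.gcd_dvd (Finset.mem_univ i)),
     fun hall => Finset.dvd_gcd fun i _ => hall i⟩
  calc (∑ v : I → ZMod m, if d ∣ Finset.univ.gcd fun i => (v i).val then (μ d : ℤ) else 0)
      = ∑ v : I → ZMod m, if (∀ i, d ∣ (v i).val) then (μ d : ℤ) else 0 :=
        Finset.sum_congr rfl fun v _ => by rw [if_congr (inner v) rfl rfl]
    _ = (Fintype.card {v : I → ZMod m // ∀ i, d ∣ (v i).val}) * (μ d : ℤ) := by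
        rw [Finset.sum_ite, Finset.sum_const, Finset.sum_const_zero, add_zero, nsmul_eq_mul,
          Fintype.card_subtype]
    _ = μ d * ((m / d : ℕ) : ℤ) ^ Fintype.card I := by
        rw [← Nat.card_eq_fintype_card, card_pi_dvd_val m d hm hdm hd0]; push_cast; ring

section GT
variable {g' b m : ℕ} (h : Fin b → ZMod m)

/-- the combined generator-value function -/
def wfun (v : (Fin g' ⊕ Fin g') → ZMod m) : (Fin g' ⊕ Fin g') ⊕ Fin b → Multiplicative (ZMod m) :=
  fun j => Multiplicative.ofAdd (Sum.elim v h j)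

lemma relator_cond (hsum : ∑ k, h k = 0) (v : (Fin g' ⊕ Fin g') → ZMod m) :
    ∀ r ∈ ({surfaceRelator g' b} : Set (FreeGroup ((Fin g' ⊕ Fin g') ⊕ Fin b))),
      FreeGroup.lift (wfun h v) r = 1 := by
  rintro r rfl
  rw [surfaceRelator, map_mul, map_list_prod, map_list_prod]
  have h1 : (List.ofFn fun j : Fin g' =>
      ⁅(FreeGroup.of (Sum.inl (Sum.inl j)) : FreeGroup ((Fin g' ⊕ Fin g') ⊕ Fin b)),
        FreeGroup.of (Sum.inl (Sum.inr j))⁆).map (FreeGroup.lift (wfun h v))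
      = List.ofFn fun _ : Fin g' => (1 : Multiplicative (ZMod m)) := by
    rw [List.map_ofFn]
    congr 1
    funext j
    simp only [Function.comp_apply, map_commutatorElement]
    exact commutatorElement_eq_one_iff_mul_comm.mpr (mul_comm _ _)
  rw [h1, List.map_ofFn]
  have h2 : ((FreeGroup.lift (wfun h v)) ∘ fun k : Fin b =>
      (FreeGroup.of (Sum.inr k) : FreeGroup ((Fin g' ⊕ Fin g') ⊕ Fin b)))
      = fun k : Fin b => Multiplicative.ofAdd (h k) := by
    funext k
    simp [wfun]
  rw [h2]
  have : (List.ofFn fun _ : Fin g' => (1 : Multiplicative (ZMod m))).prod = 1 := by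
    simp
  rw [this, one_mul, List.prod_ofFn, ← ofAdd_sum, hsum]
  rfl

/-- the homomorphism attached to `v` -/
def psiv (hsum : ∑ k, h k = 0) (v : (Fin g' ⊕ Fin g') → ZMod m) :
    SurfaceGroup g' b →* Multiplicative (ZMod m) :=
  PresentedGroup.toGroup (relator_cond h hsum v)

@[simp] lemma psiv_of (hsum : ∑ k, h k = 0) (v : (Fin g' ⊕ Fin g') → ZMod m)
    (x : (Fin g' ⊕ Fin g') ⊕ Fin b) :
    psiv h hsum v (PresentedGroup.of x) = Multiplicative.ofAdd (Sum.elim v h x) :=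
  PresentedGroup.toGroup.of _

/-- the equivalence between prescribed-boundary homomorphisms and vectors -/
def homEquiv (hsum : ∑ k, h k = 0) :
    { ψ : SurfaceGroup g' b →* Multiplicative (ZMod m) //
        ∀ k : Fin b, ψ (SurfaceGroup.gamma k) = Multiplicative.ofAdd (h k) }
      ≃ ((Fin g' ⊕ Fin g') → ZMod m) where
  toFun ψ := fun i => Multiplicative.toAdd (ψ.1 (PresentedGroup.of (Sum.inl i)))
  invFun v := ⟨psiv h hsum v, fun k => by simp [SurfaceGroup.gamma]⟩
  left_inv ψ := by
    apply Subtype.ext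
    apply PresentedGroup.ext
    intro x
    rcases x with i | k
    · simp
    · rw [psiv_of]
      exact (ψ.2 k).symm
  right_inv v := by funext i; simp

lemma homEquiv_symm_val (hsum : ∑ k, h k = 0) (v : (Fin g' ⊕ Fin g') → ZMod m) :
    ((homEquiv h hsum).symm v).1 = psiv h hsum v := rfl

end GT

section Surj
variable {g' b m : ℕ} (h : Fin b → ZMod m)

lemma bezout_step (hm : m ≠ 0) (hsum : ∑ k, h k = 0) (v : (Fin g' ⊕ Fin g') → ZMod m)
    (s : Finset ((Fin g' ⊕ Fin g') ⊕ Fin b)) :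
    ∃ x : SurfaceGroup g' b, psiv h hsum v x
      = Multiplicative.ofAdd (((s.gcd fun j => ((Sum.elim v h j).val)) : ℕ) : ZMod m) := by
  classical
  haveI : NeZero m := ⟨hm⟩
  induction s using Finset.induction_on with
  | empty =>
    refine ⟨1, ?_⟩
    simp [Finset.gcd_empty]
  | insert a s ha ih =>
    obtain ⟨x', hx'⟩ := ih
    set a' := (Sum.elim v h a).val with ha'
    set G := (s.gcd fun j => ((Sum.elim v h j).val)) with hG
    refine ⟨(PresentedGroup.of a) ^ (Nat.gcdA a' G) * x' ^ (Nat.gcdB a' G), ?_⟩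
    rw [map_mul, map_zpow, map_zpow, psiv_of, hx', Finset.gcd_insert]
    show _ = Multiplicative.ofAdd ((Nat.gcd a' G : ℕ) : ZMod m)
    rw [← ofAdd_zsmul, ← ofAdd_zsmul, ← ofAdd_add]
    congr 1
    have hb := congrArg (fun z : ℤ => (z : ZMod m)) (Nat.gcd_eq_gcd_ab a' G)
    push_cast at hb
    have hv : ((a' : ℕ) : ZMod m) = Sum.elim v h a := ZMod.natCast_rightInverse _
    rw [zsmul_eq_mul, zsmul_eq_mul, ← hv]
    rw [hb]
    ring

lemma surj_iff (hm : m ≠ 0) (hsum : ∑ k, h k = 0) (v : (Fin g' ⊕ Fin g') → ZMod m) :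
    Function.Surjective (psiv h hsum v) ↔
      Nat.gcd m (Finset.univ.gcd fun j : (Fin g' ⊕ Fin g') ⊕ Fin b =>
        ((Sum.elim v h j).val)) = 1 := by
  haveI : NeZero m := ⟨hm⟩
  set W := Finset.univ.gcd fun j : (Fin g' ⊕ Fin g') ⊕ Fin b => ((Sum.elim v h j).val) with hW
  constructor
  · intro hsurj
    by_contra hne
    set G := Nat.gcd m W with hGdef
    have hG0 : G ≠ 0 := Nat.gcd_ne_zero_left hm
    have hG1 : G ≠ 1 := hne
    have hp : (G.minFac).Prime := Nat.minFac_prime hG1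
    set p := G.minFac with hpdef
    have hpm : p ∣ m := (Nat.minFac_dvd G).trans (Nat.gcd_dvd_left m W)
    have hpW : p ∣ W := (Nat.minFac_dvd G).trans (Nat.gcd_dvd_right m W)
    haveI : NeZero p := ⟨hp.pos.ne'⟩
    haveI : Fact (1 < p) := ⟨hp.one_lt⟩
    let π : ZMod m →+* ZMod p := ZMod.castHom hpm (ZMod p)
    let ρ : Multiplicative (ZMod m) →* Multiplicative (ZMod p) :=
      AddMonoidHom.toMultiplicative π.toAddMonoidHom
    have hρs : Function.Surjective ρ := by
      intro y
      obtain ⟨n, hn⟩ := ZMod.natCast_rightInverse.surjective (Multiplicative.toAdd y)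
      refine ⟨Multiplicative.ofAdd ((n : ZMod m)), ?_⟩
      show Multiplicative.ofAdd (π (n : ZMod m)) = y
      rw [map_natCast, hn]
      rfl
    have hcomp : ρ.comp (psiv h hsum v) = 1 := by
      apply PresentedGroup.ext
      intro x
      show ρ (psiv h hsum v (PresentedGroup.of x)) = 1
      rw [psiv_of]
      show Multiplicative.ofAdd (π (Sum.elim v h x)) = 1
      have hx : Sum.elim v h x = (((Sum.elim v h x).val : ℕ) : ZMod m) :=
        (ZMod.natCast_rightInverse _).symm
      rw [hx, map_natCast, (ZMod.natCast_eq_zero_iff _ p).mpr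
        (hpW.trans (Finset.gcd_dvd (Finset.mem_univ x)))]
      rfl
    obtain ⟨y, hy⟩ := exists_ne (1 : Multiplicative (ZMod p))
    obtain ⟨x, hx⟩ := (hρs.comp hsurj) y
    apply hy
    rw [← hx]
    show ρ.comp (psiv h hsum v) x = 1
    rw [hcomp]
    rfl
  · intro hgcd
    obtain ⟨x, hx⟩ := bezout_step h hm hsum v Finset.univ
    set B := Nat.gcdB m W with hB
    have h1 : ((1 : ℕ) : ZMod m) = B • ((W : ℕ) : ZMod m) := by
      have hb := congrArg (fun z : ℤ => (z : ZMod m)) (Nat.gcd_eq_gcd_ab m W)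
      rw [hgcd] at hb
      push_cast at hb
      rw [ZMod.natCast_self] at hb
      rw [zsmul_eq_mul]
      push_cast
      rw [hb]
      ring
    intro y
    refine ⟨(x ^ B) ^ ((Multiplicative.toAdd y).val), ?_⟩
    rw [map_pow, map_zpow, hx, ← ofAdd_zsmul, ← h1, ← ofAdd_nsmul]
    show Multiplicative.ofAdd (((Multiplicative.toAdd y).val : ℕ) • ((1:ℕ) : ZMod m)) = y
    rw [nsmul_eq_mul]
    push_cast
    rw [mul_one]
    show Multiplicative.ofAdd (((Multiplicative.toAdd y).val : ℕ) : ZMod m) = y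
    rw [ZMod.natCast_rightInverse _]
    rfl
end Surj

lemma gcd_sum_split {g' b m : ℕ} (h : Fin b → ZMod m) (v : (Fin g' ⊕ Fin g') → ZMod m) :
    (Finset.univ.gcd fun j : (Fin g' ⊕ Fin g') ⊕ Fin b => ((Sum.elim v h j).val))
      = Nat.gcd (Finset.univ.gcd fun i => ((v i).val)) (Finset.univ.gcd fun k => ((h k).val)) := by
  apply Nat.dvd_antisymm
  · apply Nat.dvd_gcd
    · exact Finset.dvd_gcd fun i _ => Finset.gcd_dvd (Finset.mem_univ (Sum.inl i))
    · exact Finset.dvd_gcd fun k _ => Finset.gcd_dvd (Finset.mem_univ (Sum.inr k))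
  · refine Finset.dvd_gcd fun j _ => ?_
    rcases j with i | k
    · exact (Nat.gcd_dvd_left _ _).trans (Finset.gcd_dvd (Finset.mem_univ i))
    · exact (Nat.gcd_dvd_right _ _).trans (Finset.gcd_dvd (Finset.mem_univ k))

/-- For `G = ℤ/mℤ`, the number of surjections `ψ : Ξ_{g',b} → ℤ/mℤ` with prescribed boundary
monodromies `ψ(γ_k) = h_k` (where `∑ h_k = 0`) is `m^{2g'} ∏_{p | m₀ prime} (1 − p^{−2g'})`
with `m₀ = gcd(m, h₁, …, h_b)`, stated in denominator-cleared form. -/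
theorem card_surjections_surfaceGroup_zmod (g' b m : ℕ) (hm : 1 ≤ m)
    (h : Fin b → ZMod m) (hsum : ∑ k, h k = 0) :
    Nat.card { ψ : SurfaceGroup g' b →* Multiplicative (ZMod m) //
        Function.Surjective ψ ∧
          ∀ k : Fin b, ψ (SurfaceGroup.gamma k) = Multiplicative.ofAdd (h k) } *
      ∏ p ∈ (Nat.gcd m (Finset.univ.gcd fun k => (h k).val)).primeFactors, p ^ (2 * g')
    = m ^ (2 * g') *
      ∏ p ∈ (Nat.gcd m (Finset.univ.gcd fun k => (h k).val)).primeFactors,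
        (p ^ (2 * g') - 1) := by
  classical
  have hm0 : m ≠ 0 := by omega
  haveI : NeZero m := ⟨hm0⟩
  set B := Finset.univ.gcd fun k => ((h k).val) with hB
  set M := Nat.gcd m B with hMdef
  have hMm : M ∣ m := Nat.gcd_dvd_left m B
  have hM0 : M ≠ 0 := Nat.gcd_ne_zero_left hm0
  set N := 2 * g' with hN
  have hcardI : Fintype.card (Fin g' ⊕ Fin g') = N := by
    simp [hN, two_mul]
  -- Step 1: identify the count with the vector count
  have key : Nat.card { ψ : SurfaceGroup g' b →* Multiplicative (ZMod m) //
        Function.Surjective ψ ∧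
          ∀ k : Fin b, ψ (SurfaceGroup.gamma k) = Multiplicative.ofAdd (h k) }
      = Nat.card {v : (Fin g' ⊕ Fin g') → ZMod m //
          Nat.gcd M (Finset.univ.gcd fun i => ((v i).val)) = 1} := by
    apply Nat.card_congr
    refine (Equiv.subtypeEquivRight fun ψ => and_comm).trans ?_
    refine ((Equiv.subtypeSubtypeEquivSubtypeInter
      (fun ψ : SurfaceGroup g' b →* Multiplicative (ZMod m) =>
        ∀ k : Fin b, ψ (SurfaceGroup.gamma k) = Multiplicative.ofAdd (h k))
      (fun ψ => Function.Surjective ψ)).symm.trans ?_)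
    refine (homEquiv h hsum).subtypeEquiv fun ψ => ?_
    have hψ : ψ.1 = psiv h hsum (homEquiv h hsum ψ) := by
      have := (homEquiv h hsum).left_inv ψ
      conv_lhs => rw [← this]
      rfl
    rw [hψ, surj_iff h hm0 hsum, gcd_sum_split h,
      Nat.gcd_comm (Finset.univ.gcd fun i => (((homEquiv h hsum) ψ i).val)) B,
      ← Nat.gcd_assoc]
  -- Step 2: compute in ℤ
  have count := count_main (I := Fin g' ⊕ Fin g') m M hm0 hMm
  rw [hcardI] at count
  have goalZ : ((Nat.card { ψ : SurfaceGroup g' b →* Multiplicative (ZMod m) //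
        Function.Surjective ψ ∧
          ∀ k : Fin b, ψ (SurfaceGroup.gamma k) = Multiplicative.ofAdd (h k) } : ℤ)) *
      ∏ p ∈ M.primeFactors, (p : ℤ) ^ N
      = (m : ℤ) ^ N * ∏ p ∈ M.primeFactors, ((p : ℤ) ^ N - 1) := by
    rw [key, count]
    have hsplit : ∀ d ∈ M.divisors,
        (ArithmeticFunction.moebius d) * ((m / d : ℕ) : ℤ) ^ N
          = ((m / M : ℕ) : ℤ) ^ N * ((ArithmeticFunction.moebius d) * ((M / d : ℕ) : ℤ) ^ N) := by
      intro d hd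
      obtain ⟨hdM, -⟩ := Nat.mem_divisors.mp hd
      have hdd : (m / M) * (M / d) = m / d := by
        rw [Nat.div_mul_div_comm hMm hdM, Nat.mul_comm m M,
          Nat.mul_div_mul_left _ _ (Nat.pos_of_ne_zero hM0)]
      rw [← hdd]
      push_cast
      ring
    rw [Finset.sum_congr rfl hsplit, ← Finset.mul_sum, mul_assoc, jordan_aux N hM0]
    have hmM : ((m / M : ℕ) : ℤ) ^ N * ((M : ℤ) ^ N * ∏ p ∈ M.primeFactors, ((p : ℤ) ^ N - 1))
        = (m : ℤ) ^ N * ∏ p ∈ M.primeFactors, ((p : ℤ) ^ N - 1) := by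
      rw [← mul_assoc, ← mul_pow]
      norm_cast
      rw [Nat.div_mul_cancel hMm]
    rw [hmM]
  -- Step 3: conclude in ℕ
  have hR : ((m ^ N * ∏ p ∈ M.primeFactors, (p ^ N - 1) : ℕ) : ℤ)
      = (m : ℤ) ^ N * ∏ p ∈ M.primeFactors, ((p : ℤ) ^ N - 1) := by
    push_cast
    congr 1
    refine Finset.prod_congr rfl fun p hp => ?_
    have hp1 : 1 ≤ p ^ N :=
      Nat.one_le_pow _ _ (Nat.prime_of_mem_primeFactors hp).pos
    push_cast [Nat.cast_sub hp1]
    ring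
  have : ((Nat.card { ψ : SurfaceGroup g' b →* Multiplicative (ZMod m) //
        Function.Surjective ψ ∧
          ∀ k : Fin b, ψ (SurfaceGroup.gamma k) = Multiplicative.ofAdd (h k) } *
      ∏ p ∈ M.primeFactors, p ^ N : ℕ) : ℤ)
      = ((m ^ N * ∏ p ∈ M.primeFactors, (p ^ N - 1) : ℕ) : ℤ) := by
    rw [hR]
    push_cast
    rw [← goalZ]
  exact_mod_cast this
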